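/- For every fair division instance with n agents, a finite set M of items, monotone nondecreasing integer-valued valuations v_1, …, v_n with v_i(∅) = 0, and every rational ε with 0 < ε < 1, there exists a (1−ε)-EQx allocation, i.e., an allocation (A_1, …, A_n) such that for all agents i, j and every item g ∈ A_j, (1−ε) · v_j(A_j \ {g}) ≤ v_i(A_i) (as rationals). -/

import Mathlib

/-- An allocation: pairwise disjoint bundles covering all the items. -/
def IsAllocation {ι : Type*} {n : ℕ} (A : Fin n → Finset ι) : Prop :=
  (∀ i j : Fin n, i ≠ j → Disjoint (A i) (A j)) ∧ ∀ x : ι, ∃ i : Fin n, x ∈ A i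

/-- For every fair division instance with monotone nondecreasing integer-valued valuations and
every rational `ε ∈ (0,1)`, a `(1-ε)`-EQx allocation exists. -/
theorem approx_eqx_exists_monotone_nondecreasing
    {ι : Type*} [Fintype ι] [DecidableEq ι] {n : ℕ} (hn : 0 < n)
    (v : Fin n → Finset ι → ℤ)
    (hzero : ∀ i, v i ∅ = 0)
    (hmono : ∀ (i : Fin n) (S : Finset ι) (x : ι), v i S ≤ v i (insert x S))
    (ε : ℚ) (hε0 : 0 < ε) (hε1 : ε < 1) :
    ∃ A : Fin n → Finset ι, IsAllocation A ∧
      ∀ i j : Fin n, ∀ g ∈ A j,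
        (1 - ε) * ((v j ((A j).erase g) : ℚ)) ≤ ((v i (A i) : ℚ)) := by
  classical
  -- monotonicity under subsets
  have hsub : ∀ (i : Fin n) (S T : Finset ι), S ⊆ T → v i S ≤ v i T := by
    intro i S T hST
    have h : ∀ (U : Finset ι), v i S ≤ v i (S ∪ U) := by
      intro U
      induction U using Finset.induction_on with
      | empty => simp
      | insert _ _ hx ih =>
        rename_i x U'
        calc v i S ≤ v i (S ∪ U') := ih
        _ ≤ v i (insert x (S ∪ U')) := hmono i _ x
        _ = v i (S ∪ insert x U') := by rw [Finset.union_insert]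
    have h2 := h T
    rwa [Finset.union_eq_right.mpr hST] at h2
  have hnn : ∀ (i : Fin n) (S : Finset ι), 0 ≤ v i S := by
    intro i S
    have h := hsub i ∅ S (Finset.empty_subset S)
    rwa [hzero i] at h
  set m : ℕ := Fintype.card ι with hm
  set q : (Fin n → Finset ι) → Fin n → ℤ :=
    fun A k => v k (A k) * ((m : ℤ) + 1) + (A k).card with hqdef
  set Φ : (Fin n → Finset ι) → ℚ := fun A => ∑ k, (3 : ℚ) ^ (-(q A k)) with hΦdef
  -- if the allocation is not (1-ε)-EQx, a strictly better one exists
  have hmove : ∀ A : Fin n → Finset ι, IsAllocation A →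
      (¬ ∀ i j : Fin n, ∀ g ∈ A j,
        (1 - ε) * ((v j ((A j).erase g) : ℚ)) ≤ ((v i (A i) : ℚ))) →
      ∃ A' : Fin n → Finset ι, IsAllocation A' ∧ Φ A' < Φ A := by
    intro A hA hviol
    push_neg at hviol
    obtain ⟨i, j, g, hg, hlt⟩ := hviol
    have hbnn : (0 : ℤ) ≤ v j ((A j).erase g) := hnn j _
    have hberase : v j ((A j).erase g) ≤ v j (A j) := hsub j _ _ (Finset.erase_subset _ _)
    have hij : i ≠ j := by
      rintro rfl
      have h1 : (1 - ε) * ((v i ((A i).erase g) : ℚ)) ≤ ((v i ((A i).erase g) : ℚ)) := by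
        have : (0 : ℚ) ≤ ((v i ((A i).erase g) : ℚ)) := by exact_mod_cast hbnn
        nlinarith
      have h2 : ((v i ((A i).erase g) : ℚ)) ≤ ((v i (A i) : ℚ)) := by exact_mod_cast hberase
      linarith
    have hgnotin : g ∉ A i := fun hgi =>
      (Finset.disjoint_left.mp (hA.1 i j hij) hgi) hg
    -- the key integer inequality: v i (A i) + 1 ≤ v j (erase)
    have hab : v i (A i) + 1 ≤ v j ((A j).erase g) := by
      have hbq : (0 : ℚ) ≤ ((v j ((A j).erase g) : ℚ)) := by exact_mod_cast hbnn
      have : ((v i (A i) : ℚ)) < ((v j ((A j).erase g) : ℚ)) := by nlinarith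
      have : v i (A i) < v j ((A j).erase g) := by exact_mod_cast this
      omega
    -- the improved allocation
    set A' : Fin n → Finset ι := fun k =>
      if k = i then insert g (A i) else if k = j then (A j).erase g else A k with hA'def
    have hA'i : A' i = insert g (A i) := by simp [hA'def]
    have hA'j : A' j = (A j).erase g := by simp [hA'def, hij.symm, Ne.symm hij]
    have hA'o : ∀ k : Fin n, k ≠ i → k ≠ j → A' k = A k := by
      intro k h1 h2; simp [hA'def, h1, h2]
    have hmem : ∀ (k : Fin n) (x : ι), x ∈ A' k ↔ (x = g ∧ k = i) ∨ (x ∈ A k ∧ x ≠ g) := by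
      intro k x
      by_cases hki : k = i
      · subst hki
        rw [hA'i]
        simp only [Finset.mem_insert]
        constructor
        · rintro (rfl | hx)
          · exact Or.inl ⟨rfl, by trivial⟩
          · rcases eq_or_ne x g with rfl | hxg
            · exact absurd hx hgnotin
            · exact Or.inr ⟨hx, hxg⟩
        · rintro (⟨rfl, -⟩ | ⟨hx, -⟩)
          · exact Or.inl rfl
          · exact Or.inr hx
      · by_cases hkj : k = j
        · subst hkj
          rw [hA'j]
          simp only [Finset.mem_erase]
          constructor
          · rintro ⟨h1, h2⟩; exact Or.inr ⟨h2, h1⟩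
          · rintro (⟨-, hk⟩ | ⟨h1, h2⟩)
            · exact absurd hk hki
            · exact ⟨h2, h1⟩
        · rw [hA'o k hki hkj]
          constructor
          · intro hx
            have hxg : x ≠ g := by
              rintro rfl
              exact (Finset.disjoint_left.mp (hA.1 k j hkj) hx) hg
            exact Or.inr ⟨hx, hxg⟩
          · rintro (⟨-, hk⟩ | ⟨hx, -⟩)
            · exact absurd hk hki
            · exact hx
    have hA' : IsAllocation A' := by
      constructor
      · intro k l hkl
        rw [Finset.disjoint_left]
        intro x hxk hxl
        rw [hmem] at hxk hxl
        rcases hxk with ⟨rfl, rfl⟩ | ⟨hxk, hxg⟩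
        · rcases hxl with ⟨-, rfl⟩ | ⟨-, hxg⟩
          · exact hkl rfl
          · exact hxg rfl
        · rcases hxl with ⟨rfl, -⟩ | ⟨hxl, -⟩
          · exact hxg rfl
          · exact (Finset.disjoint_left.mp (hA.1 k l hkl) hxk) hxl
      · intro x
        rcases eq_or_ne x g with rfl | hxg
        · exact ⟨i, (hmem i x).mpr (Or.inl ⟨rfl, rfl⟩)⟩
        · obtain ⟨k, hk⟩ := hA.2 x
          exact ⟨k, (hmem k x).mpr (Or.inr ⟨hk, hxg⟩)⟩
    refine ⟨A', hA', ?_⟩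
    -- compare potentials
    have hsplit : ∀ (u : Fin n → ℚ),
        ∑ k, u k = u j + (u i + ∑ k ∈ (Finset.univ.erase j).erase i, u k) := by
      intro u
      rw [Finset.add_sum_erase _ u (show i ∈ Finset.univ.erase j by simp [hij]),
        Finset.add_sum_erase _ u (Finset.mem_univ j)]
    have htail : ∀ k ∈ (Finset.univ.erase j).erase i,
        (3 : ℚ) ^ (-(q A' k)) = (3 : ℚ) ^ (-(q A k)) := by
      intro k hk
      simp only [Finset.mem_erase] at hk
      have : A' k = A k := by simp [hA'def, hk.1, hk.2.1]
      simp [hqdef, this]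
    -- exponent bounds
    have hcard_i : ((A i).card : ℤ) ≤ m := by
      exact_mod_cast Finset.card_le_card (Finset.subset_univ (A i)) |>.trans_eq
        (by simp [hm])
    have hqi' : q A i + 1 ≤ q A' i := by
      have h1 : v i (A i) ≤ v i (insert g (A i)) := hmono i _ g
      have h2 : ((A' i).card : ℤ) = (A i).card + 1 := by
        rw [hA'i, Finset.card_insert_of_notMem hgnotin]; push_cast; ring
      have h3 : v i (A' i) = v i (insert g (A i)) := by rw [hA'i]
      simp only [hqdef]
      rw [h2, h3]
      nlinarith [hnn i (A i)]
    have hqj' : q A i + 1 ≤ q A' j := by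
      have h1 : (0 : ℤ) ≤ ((A' j).card : ℤ) := Int.natCast_nonneg _
      have h2 : v j (A' j) = v j ((A j).erase g) := by rw [hA'j]
      simp only [hqdef]
      rw [h2]
      nlinarith [hab, hcard_i]
    have h3pos : ∀ z : ℤ, (0 : ℚ) < (3 : ℚ) ^ z := fun z => zpow_pos (by norm_num) z
    have hbound : ∀ z : ℤ, q A i + 1 ≤ z → (3 : ℚ) ^ (-z) ≤ (3 : ℚ) ^ (-(q A i) - 1) := by
      intro z hz
      exact zpow_le_zpow_right₀ (by norm_num) (by omega)
    have hkey : (3 : ℚ) ^ (-(q A' i)) + (3 : ℚ) ^ (-(q A' j))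
        < (3 : ℚ) ^ (-(q A i)) + (3 : ℚ) ^ (-(q A j)) := by
      have b1 := hbound _ hqi'
      have b2 := hbound _ hqj'
      have hsplit3 : (3 : ℚ) ^ (-(q A i)) = (3 : ℚ) ^ (-(q A i) - 1) * 3 := by
        rw [← zpow_add_one₀ (by norm_num : (3:ℚ) ≠ 0)]
        ring_nf
      have hp := h3pos (-(q A i) - 1)
      have hpj := h3pos (-(q A j))
      nlinarith
    calc Φ A' = (3 : ℚ) ^ (-(q A' j)) + ((3 : ℚ) ^ (-(q A' i))
          + ∑ k ∈ (Finset.univ.erase j).erase i, (3 : ℚ) ^ (-(q A' k))) := by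
            simp only [hΦdef]; exact hsplit (fun k => (3 : ℚ) ^ (-(q A' k)))
      _ = (3 : ℚ) ^ (-(q A' j)) + ((3 : ℚ) ^ (-(q A' i))
          + ∑ k ∈ (Finset.univ.erase j).erase i, (3 : ℚ) ^ (-(q A k))) := by
            rw [Finset.sum_congr rfl htail]
      _ < (3 : ℚ) ^ (-(q A j)) + ((3 : ℚ) ^ (-(q A i))
          + ∑ k ∈ (Finset.univ.erase j).erase i, (3 : ℚ) ^ (-(q A k))) := by linarith
      _ = Φ A := by simp only [hΦdef]; exact (hsplit (fun k => (3 : ℚ) ^ (-(q A k)))).symm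
  -- there is some allocation
  have hA0 : IsAllocation (fun k : Fin n => if k = ⟨0, hn⟩ then (Finset.univ : Finset ι) else ∅) := by
    constructor
    · intro k l hkl
      by_cases hk : k = ⟨0, hn⟩
      · have hl : l ≠ ⟨0, hn⟩ := by rintro rfl; exact hkl hk
        simp [hk, hl]
      · simp [hk]
    · intro x
      exact ⟨⟨0, hn⟩, by simp⟩
  -- take a Φ-minimal allocation
  set S : Finset (Fin n → Finset ι) := Finset.univ.filter (fun A => IsAllocation A) with hSdef
  have hS : S.Nonempty :=
    ⟨(fun k : Fin n => if k = ⟨0, hn⟩ then (Finset.univ : Finset ι) else ∅),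
      by simp [hSdef, hA0]⟩
  obtain ⟨A, hAS, hminA⟩ := Finset.exists_min_image S Φ hS
  have hAalloc : IsAllocation A := by
    have := Finset.mem_filter.mp hAS
    exact this.2
  refine ⟨A, hAalloc, ?_⟩
  by_contra hcon
  obtain ⟨A', hA', hltΦ⟩ := hmove A hAalloc hcon
  have := hminA A' (by simp [hSdef, hA'])
  linarith
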